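/- Let (X,d) be a metric space, (x_n) a Cauchy sequence in X, and y, z ∈ X a good pair, i.e., y ≠ z and neither d(x_n,y) → 0 nor d(x_n,z) → 0. Then (d(x_n,y)·d(x_m,z))/(d(x_n,z)·d(x_m,y)) → 1 as n,m → ∞. -/

import Mathlib

open Filter

/-- For a Cauchy sequence in a metric space and a good pair (y,z),
the middle-component ratio of the cross-ratio triple tends to 1. -/
theorem cauchy_crt_middle_component_tendsto_one {X : Type*} [MetricSpace X]
    (x : ℕ → X) (hx : CauchySeq x) (y z : X) (hyz : y ≠ z)
    (hy : ¬ Tendsto (fun n => dist (x n) y) atTop (nhds 0))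
    (hz : ¬ Tendsto (fun n => dist (x n) z) atTop (nhds 0)) :
    Tendsto
      (fun p : ℕ × ℕ =>
        dist (x p.1) y * dist (x p.2) z / (dist (x p.1) z * dist (x p.2) y))
      (atTop ×ˢ atTop) (nhds 1) := by
  have ucy : UniformContinuous (fun p : X => dist p y) :=
    uniformContinuous_id.dist uniformContinuous_const
  have ucz : UniformContinuous (fun p : X => dist p z) :=
    uniformContinuous_id.dist uniformContinuous_const
  obtain ⟨a, ha⟩ := cauchySeq_tendsto_of_complete (ucy.comp_cauchySeq hx)
  obtain ⟨b, hb⟩ := cauchySeq_tendsto_of_complete (ucz.comp_cauchySeq hx)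
  have ha0 : a ≠ 0 := fun h => hy (h ▸ ha)
  have hb0 : b ≠ 0 := fun h => hz (h ▸ hb)
  have key :
      Tendsto
        (fun p : ℕ × ℕ =>
          dist (x p.1) y * dist (x p.2) z / (dist (x p.1) z * dist (x p.2) y))
        (atTop ×ˢ atTop) (nhds ((a * b) / (b * a))) :=
    ((ha.comp tendsto_fst).mul (hb.comp tendsto_snd)).div
      ((hb.comp tendsto_fst).mul (ha.comp tendsto_snd))
      (mul_ne_zero hb0 ha0)
  have : (a * b) / (b * a) = 1 := by
    field_simp
  rwa [this] at key
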